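/- Let X be a Hausdorff topological space and f : X → X a continuous function. For every u ∈ ℱ(X) (normal upper semicontinuous fuzzy set with compact support) and every α ∈ [0,1], the α-cut of the Zadeh extension satisfies (f̂(u))_α = f(u_α). -/

import Mathlib

open Set Filter Topology
open scoped Uniformity

/-- The α-cut of a fuzzy set: `{x | α ≤ u x}` for `α ≠ 0`, and the support
(closure of `{x | 0 < u x}`) for `α = 0`. -/
noncomputable def fuzzyCut {X : Type*} [TopologicalSpace X] (u : X → ℝ) (α : ℝ) : Set X :=
  if α = 0 then closure {x | 0 < u x} else {x | α ≤ u x}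

/-- `u` belongs to `ℱ(X)`: a normal upper semicontinuous `[0,1]`-valued fuzzy set
with compact support. -/
structure IsFuzzySet {X : Type*} [TopologicalSpace X] (u : X → ℝ) : Prop where
  mem_Icc : ∀ x, u x ∈ Set.Icc (0:ℝ) 1
  usc : UpperSemicontinuous u
  normal : ∃ x, u x = 1
  compact_supp : IsCompact (closure {x | 0 < u x})

/-- The Zadeh extension of `f`: `x ↦ sup {u z : f z = x}` (and `0` when the
preimage is empty, since `sSup ∅ = 0` in `ℝ`). -/
noncomputable def zadeh {X : Type*} (f : X → X) (u : X → ℝ) : X → ℝ :=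
  fun x => sSup (u '' (f ⁻¹' {x}))

/-- `W(A) = ⋃ a ∈ A, W(a)` where `W(a) = {y | (a, y) ∈ W}`. -/
def ballImage {Y : Type*} (W : Set (Y × Y)) (A : Set Y) : Set Y :=
  {y | ∃ a ∈ A, (a, y) ∈ W}

/-- The Hausdorff entourage relation `𝒦[W]`: `(A,B) ∈ 𝒦[W]` iff `A ⊆ W(B)` and `B ⊆ W(A)`. -/
def KRel {Y : Type*} (W : Set (Y × Y)) (A B : Set Y) : Prop :=
  A ⊆ ballImage W B ∧ B ⊆ ballImage W A

/-- The level-wise entourage relation `ℱ[W]`: `(u_α, v_α) ∈ 𝒦[W]` for all `α ∈ [0,1]`. -/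
def FRel {X : Type*} [TopologicalSpace X] (W : Set (X × X)) (u v : X → ℝ) : Prop :=
  ∀ α ∈ Set.Icc (0:ℝ) 1, KRel W (fuzzyCut u α) (fuzzyCut v α)

/-- The Skorokhod entourage relation `G[W, ε]`: there is an increasing homeomorphism `t`
of `[0,1]` with `‖t‖ < ε` and `(u_α, v_{t α}) ∈ 𝒦[W]` for all `α ∈ [0,1]`. -/
def SkoRel {X : Type*} [TopologicalSpace X] (W : Set (X × X)) (ε : ℝ) (u v : X → ℝ) : Prop :=
  ∃ t : ℝ → ℝ, StrictMonoOn t (Set.Icc 0 1) ∧ t 0 = 0 ∧ t 1 = 1 ∧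
    Set.MapsTo t (Set.Icc 0 1) (Set.Icc 0 1) ∧ Set.SurjOn t (Set.Icc 0 1) (Set.Icc 0 1) ∧
    (∀ α ∈ Set.Icc (0:ℝ) 1, |t α - α| < ε) ∧
    (∀ α ∈ Set.Icc (0:ℝ) 1, KRel W (fuzzyCut u α) (fuzzyCut v (t α)))

/-- The sendograph of `u`: `end(u) ∩ (u₀ × [0,1])`. -/
noncomputable def send {X : Type*} [TopologicalSpace X] (u : X → ℝ) : Set (X × ℝ) :=
  {p | p.1 ∈ fuzzyCut u 0 ∧ p.2 ∈ Set.Icc (0:ℝ) 1 ∧ p.2 ≤ u p.1}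

/-- The product entourage `U × V_ε` on `X × [0,1]`. -/
def prodEnt {X : Type*} (U : Set (X × X)) (ε : ℝ) : Set ((X × ℝ) × (X × ℝ)) :=
  {p | (p.1.1, p.2.1) ∈ U ∧ |p.1.2 - p.2.2| < ε}

/-- The sendograph entourage relation `S[U, ε]`. -/
noncomputable def SendRel {X : Type*} [TopologicalSpace X] (U : Set (X × X)) (ε : ℝ)
    (u v : X → ℝ) : Prop :=
  KRel (prodEnt U ε) (send u) (send v)

/-- `u_{α⁺} = closure (⋃ β ∈ (α, 1], u_β)`, the right limit of the level map. -/
noncomputable def cutPlus {X : Type*} [TopologicalSpace X] (u : X → ℝ) (α : ℝ) : Set X :=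
  closure (⋃ β ∈ Set.Ioc α 1, fuzzyCut u β)

/-- `B` belongs to the Vietoris basic open set `⟨V 0, …, V (k-1)⟩`. -/
def inVietoris {Y : Type*} (B : Set Y) (k : ℕ) (V : Fin k → Set Y) : Prop :=
  B ⊆ (⋃ i, V i) ∧ ∀ i, (B ∩ V i).Nonempty

theorem stmt4 {X : Type*} [TopologicalSpace X] [T2Space X] {f : X → X} (hf : Continuous f)
    {u : X → ℝ} (hu : IsFuzzySet u) {α : ℝ} (hα : α ∈ Set.Icc (0:ℝ) 1) :
    fuzzyCut (zadeh f u) α = f '' fuzzyCut u α := by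
  have hbdd : ∀ x : X, BddAbove (u '' (f ⁻¹' {x})) := fun x =>
    ⟨1, fun y ⟨z, _, hz⟩ => hz ▸ (hu.mem_Icc z).2⟩
  have hle : ∀ z : X, u z ≤ zadeh f u (f z) := fun z =>
    le_csSup (hbdd (f z)) ⟨z, rfl, rfl⟩
  -- key: for α > 0, the sup is attained above level α
  have key : ∀ β : ℝ, 0 < β → ∀ x : X, β ≤ zadeh f u x → ∃ z, β ≤ u z ∧ f z = x := by
    intro β hβ x hx
    have hne : (u '' (f ⁻¹' {x})).Nonempty := by
      by_contra h
      rw [Set.not_nonempty_iff_eq_empty] at h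
      rw [zadeh, h, Real.sSup_empty] at hx
      linarith
    -- family of compact sets
    have hI : Nonempty (Set.Ioo (0:ℝ) β) := Set.nonempty_Ioo.2 hβ |>.to_subtype
    set t : Set.Ioo (0:ℝ) β → Set X := fun γ => f ⁻¹' {x} ∩ {z | (γ:ℝ) ≤ u z} with ht
    have htcl : ∀ γ, IsClosed (t γ) := by
      intro γ
      exact ((isClosed_singleton.preimage hf)).inter (hu.usc.isClosed_preimage (γ:ℝ))
    have htc : ∀ γ, IsCompact (t γ) := by
      intro γ
      refine (hu.compact_supp.of_isClosed_subset (htcl γ) ?_)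
      intro z hz
      exact subset_closure (lt_of_lt_of_le γ.2.1 hz.2)
    have htn : ∀ γ, (t γ).Nonempty := by
      intro γ
      obtain ⟨y, ⟨z, hz, rfl⟩, hy⟩ := exists_lt_of_lt_csSup hne (lt_of_lt_of_le γ.2.2 hx)
      exact ⟨z, hz, le_of_lt hy⟩
    have htd : Directed (· ⊇ ·) t := by
      intro γ₁ γ₂
      rcases le_total (γ₁:ℝ) (γ₂:ℝ) with h | h
      · exact ⟨γ₂, fun z hz => ⟨hz.1, le_trans h hz.2⟩, fun z hz => hz⟩
      · exact ⟨γ₁, fun z hz => hz, fun z hz => ⟨hz.1, le_trans h hz.2⟩⟩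
    obtain ⟨z, hz⟩ := IsCompact.nonempty_iInter_of_directed_nonempty_isCompact_isClosed
      t htd htn htc htcl
    simp only [Set.mem_iInter] at hz
    refine ⟨z, ?_, ?_⟩
    · by_contra h
      push_neg at h
      set γ : ℝ := (max (u z) 0 + β) / 2 with hγ
      have hγ1 : 0 < γ := by positivity
      have hγ2 : γ < β := by
        have := le_max_left (u z) 0
        have := le_max_right (u z) 0
        simp only [hγ]
        cases' max_cases (u z) 0 with h' h' <;> rw [h'.1] <;> linarith
      have := (hz ⟨γ, hγ1, hγ2⟩).2
      simp only [Set.mem_setOf_eq] at this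
      have : u z < γ := by
        have := le_max_left (u z) 0
        simp only [hγ]; linarith
      linarith [(hz ⟨(max (u z) 0 + β) / 2, hγ1, hγ2⟩).2]
    · exact (hz ⟨β/2, by positivity, by linarith⟩).1
  rcases eq_or_lt_of_le hα.1 with h0 | h0
  · -- α = 0 case
    rw [fuzzyCut, fuzzyCut, if_pos h0.symm, if_pos h0.symm]
    have himg : {x | 0 < zadeh f u x} = f '' {z | 0 < u z} := by
      ext x
      constructor
      · intro hx
        obtain ⟨z, hz1, hz2⟩ := key (zadeh f u x) hx x le_rfl
        exact ⟨z, lt_of_lt_of_le hx hz1, hz2⟩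
      · rintro ⟨z, hz, rfl⟩
        exact lt_of_lt_of_le hz (hle z)
    rw [himg]
    apply le_antisymm
    · apply closure_minimal (Set.image_mono (f := f) subset_closure)
      exact (hu.compact_supp.image hf).isClosed
    · exact (image_closure_subset_closure_image hf)
  · -- α > 0 case
    rw [fuzzyCut, fuzzyCut, if_neg (ne_of_gt h0), if_neg (ne_of_gt h0)]
    ext x
    constructor
    · intro hx
      obtain ⟨z, hz1, hz2⟩ := key α h0 x hx
      exact ⟨z, hz1, hz2⟩
    · rintro ⟨z, hz, rfl⟩
      exact le_trans hz (hle z)
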